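/- arXiv:1211.0172 — 5 statements merged into one kernel-verified Lean document; each statement's English description precedes it below -/
import Mathlib

section
/- Let G be an abelian group generated by a finite set S. Then the future causal subgroup S^(0)_+ (generated by ⋃_{n≥1} S^n S^{-n}) equals the causal subgroup S^(0) (generated by ⋃_{n∈ℤ} S^n S^{-n}); i.e., the Cayley graph Γ(G,S) is nonseparating. -/
open Pointwise

/-- The future causal subgroup `S⁽⁰⁾₊`, generated by `⋃_{n ≥ 1} Sⁿ S⁻ⁿ`. -/
def futureCausalSubgroup {G : Type*} [Group G] (S : Set G) : Subgroup G :=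
  Subgroup.closure (⋃ n : ℕ, S ^ (n + 1) * S⁻¹ ^ (n + 1))

/-- The causal subgroup `S⁽⁰⁾`, generated by `⋃_{n ∈ ℤ} Sⁿ S⁻ⁿ`, i.e. by all
products `Sⁿ S⁻ⁿ` (for `n ≥ 0`) together with all products `S⁻ⁿ Sⁿ`
(corresponding to negative `n`). -/
def fullCausalSubgroup {G : Type*} [Group G] (S : Set G) : Subgroup G :=
  Subgroup.closure ((⋃ n : ℕ, S ^ n * S⁻¹ ^ n) ∪ (⋃ n : ℕ, S⁻¹ ^ n * S ^ n))

/-- For an abelian group `G` generated by a finite set `S`, the future causal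
subgroup equals the causal subgroup: the Cayley graph `Γ(G,S)` is
nonseparating. -/
theorem abelian_nonseparating {G : Type*} [CommGroup G] (S : Set G)
    (hfin : S.Finite) (hgen : Subgroup.closure S = ⊤) :
    futureCausalSubgroup S = fullCausalSubgroup S := by
  unfold futureCausalSubgroup fullCausalSubgroup
  apply le_antisymm
  · apply Subgroup.closure_mono
    intro x hx
    rw [Set.mem_iUnion] at hx
    obtain ⟨n, hn⟩ := hx
    exact Or.inl (Set.mem_iUnion.mpr ⟨n + 1, hn⟩)
  · rw [Subgroup.closure_le]
    rintro x (hx | hx) <;> rw [Set.mem_iUnion] at hx <;> obtain ⟨n, hn⟩ := hx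
    · cases n with
      | zero =>
        simp only [pow_zero, Set.mem_mul, Set.mem_one] at hn
        obtain ⟨a, ha, b, hb, rfl⟩ := hn
        subst ha; subst hb
        simpa using (Subgroup.closure _).one_mem
      | succ n =>
        exact Subgroup.subset_closure (Set.mem_iUnion.mpr ⟨n, hn⟩)
    · rw [mul_comm (S⁻¹ ^ n) (S ^ n)] at hn
      cases n with
      | zero =>
        simp only [pow_zero, Set.mem_mul, Set.mem_one] at hn
        obtain ⟨a, ha, b, hb, rfl⟩ := hn
        subst ha; subst hb
        simpa using (Subgroup.closure _).one_mem
      | succ n =>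
        exact Subgroup.subset_closure (Set.mem_iUnion.mpr ⟨n, hn⟩)
end

section
/- Let G be a group generated by S such that for every c, d ∈ S, the element c⁻¹d belongs to the future causal subgroup S^(0)_+. Then S^(0)_+ = S^(0), i.e., the Cayley graph Γ(G,S) is nonseparating. -/
open Pointwise

/-- If for every `c, d ∈ S` the element `c⁻¹ d` lies in the future causal
subgroup `S⁽⁰⁾₊`, then `S⁽⁰⁾₊ = S⁽⁰⁾`: the Cayley graph `Γ(G,S)` is
nonseparating. -/
theorem nonseparating_of_invMulGen {G : Type*} [Group G] (S : Set G)
    (hfin : S.Finite) (hgen : Subgroup.closure S = ⊤)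
    (h : ∀ c ∈ S, ∀ d ∈ S, c⁻¹ * d ∈ futureCausalSubgroup S) :
    futureCausalSubgroup S = fullCausalSubgroup S := by
  set H := futureCausalSubgroup S with hH
  -- each Sⁿ⁺¹ S⁻⁽ⁿ⁺¹⁾ is inside H
  have hgensub : ∀ n : ℕ, S ^ (n + 1) * S⁻¹ ^ (n + 1) ⊆ (H : Set G) := by
    intro n
    refine subset_trans ?_ Subgroup.subset_closure
    exact Set.subset_iUnion (fun n : ℕ => S ^ (n + 1) * S⁻¹ ^ (n + 1)) n
  -- conjugation a • H • a⁻¹ ⊆ H for a ∈ S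
  have hconj : ∀ a ∈ S, ∀ x ∈ H, a * x * a⁻¹ ∈ H := by
    intro a ha x hx
    induction hx using Subgroup.closure_induction with
    | mem y hy =>
        obtain ⟨_, ⟨n, rfl⟩, hy⟩ := hy
        obtain ⟨u, hu, w, hw, rfl⟩ := hy
        have h1 : a * u ∈ S ^ (n + 2) := by
          rw [pow_succ']
          exact Set.mul_mem_mul ha hu
        have h2 : w * a⁻¹ ∈ S⁻¹ ^ (n + 2) := by
          rw [pow_succ]
          exact Set.mul_mem_mul hw (Set.inv_mem_inv.mpr ha)
        have : (a * u) * (w * a⁻¹) ∈ H := hgensub (n + 1) (Set.mul_mem_mul h1 h2)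
        simpa [mul_assoc] using this
    | one => simpa using H.one_mem
    | mul y z hy hz hy' hz' =>
        have := H.mul_mem hy' hz'
        simpa [mul_assoc] using this
    | inv y hy hy' =>
        have := H.inv_mem hy'
        simpa [mul_assoc] using this
  have hconjinv : ∀ a ∈ S, ∀ x ∈ H, a⁻¹ * x * a ∈ H := by
    intro a ha x hx
    induction hx using Subgroup.closure_induction with
    | mem y hy =>
        obtain ⟨_, ⟨n, rfl⟩, hy⟩ := hy
        obtain ⟨u, hu, w, hw, rfl⟩ := hy
        match n with
        | 0 =>
            simp only [zero_add, pow_one] at hu hw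
            rw [Set.mem_inv] at hw
            have h1 : a⁻¹ * u ∈ H := h a ha u hu
            have h2 : a⁻¹ * w⁻¹ ∈ H := h a ha w⁻¹ hw
            have h3 : (a⁻¹ * u) * (a⁻¹ * w⁻¹)⁻¹ ∈ H := H.mul_mem h1 (H.inv_mem h2)
            show a⁻¹ * (u * w) * a ∈ H
            have e : a⁻¹ * (u * w) * a = (a⁻¹ * u) * (a⁻¹ * w⁻¹)⁻¹ := by group
            rw [e]; exact h3
        | Nat.succ m =>
            rw [pow_succ'] at hu
            rw [pow_succ] at hw
            obtain ⟨b, hb, u', hu', rfl⟩ := hu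
            obtain ⟨w', hw', c, hc, rfl⟩ := hw
            rw [Set.mem_inv] at hc
            have h1 : a⁻¹ * b ∈ H := h a ha b hb
            have h2 : a⁻¹ * c⁻¹ ∈ H := h a ha c⁻¹ hc
            have h3 : u' * w' ∈ H := hgensub m (Set.mul_mem_mul hu' hw')
            have : (a⁻¹ * b) * (u' * w') * (a⁻¹ * c⁻¹)⁻¹ ∈ H :=
              H.mul_mem (H.mul_mem h1 h3) (H.inv_mem h2)
            simpa [mul_assoc] using this
    | one => simpa using H.one_mem
    | mul y z hy hz hy' hz' =>
        have := H.mul_mem hy' hz'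
        simpa [mul_assoc] using this
    | inv y hy hy' =>
        have := H.inv_mem hy'
        simpa [mul_assoc] using this
  -- H is normal
  have hnorm : ∀ g : G, ∀ x ∈ H, g * x * g⁻¹ ∈ H := by
    have hsub : S ⊆ (Subgroup.normalizer (H : Set G) : Set G) := by
      intro a ha
      rw [SetLike.mem_coe, Subgroup.mem_normalizer_iff]
      intro x
      constructor
      · intro hx
        exact hconj a ha x hx
      · intro hx
        have h5 := hconjinv a ha _ hx
        have e : a⁻¹ * (a * x * a⁻¹) * a = x := by group
        rwa [e] at h5
    have : Subgroup.closure S ≤ Subgroup.normalizer (H : Set G) := (Subgroup.closure_le _).mpr hsub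
    rw [hgen, top_le_iff] at this
    intro g x hx
    have hg : g ∈ Subgroup.normalizer (H : Set G) := this ▸ Subgroup.mem_top g
    exact (Subgroup.mem_normalizer_iff.mp hg x).mp hx
  apply le_antisymm
  · rw [hH, futureCausalSubgroup, fullCausalSubgroup, Subgroup.closure_le]
    intro x hx
    apply Subgroup.subset_closure
    left
    obtain ⟨_, ⟨n, rfl⟩, hx⟩ := hx
    exact Set.mem_iUnion.mpr ⟨n + 1, hx⟩
  · rw [fullCausalSubgroup, Subgroup.closure_le]
    intro x hx
    rcases hx with hx | hx
    · obtain ⟨_, ⟨n, rfl⟩, hx⟩ := hx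
      match n with
      | 0 => simpa using (by simpa using hx : x = 1) ▸ H.one_mem
      | Nat.succ m => exact hgensub m hx
    · obtain ⟨_, ⟨n, rfl⟩, hx⟩ := hx
      obtain ⟨w, hw, u, hu, rfl⟩ := hx
      match n with
      | 0 =>
          simp only [pow_zero, Set.mem_one] at hw hu
          subst hw; subst hu
          simpa using H.one_mem
      | Nat.succ m =>
          have huw : u * w ∈ H := hgensub m (Set.mul_mem_mul hu hw)
          have h4 := hnorm w _ huw
          show w * u ∈ H
          have e : w * u = w * (u * w) * w⁻¹ := by group
          rw [e]; exact h4
end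

section
/- The total permutation operator P_{gφ} associated with a shifted S-preserving automorphism gφ commutes with the step operator T: T P_{gφ} = P_{gφ} T. -/
/-- The total permutation operator `P_{gφ}` (acting on the basis of
`ℋ = ℓ²(G) ⊗ ℓ²(S)` by `|x,c⟩ ↦ |g·φ(x), φ(c)⟩`, for `g ∈ G` and an
automorphism `φ` of `G` with `φ(S) = S`) commutes with the step operator
`T : |x,c⟩ ↦ |xc,c⟩`. -/
theorem perm_operator_commutes_step {G : Type*} [Group G] (S : Set G)
    (H : Type*) [NormedAddCommGroup H] [InnerProductSpace ℂ H] [CompleteSpace H]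
    (e : HilbertBasis (G × ↥S) ℂ H) (T P : H →L[ℂ] H)
    (hT : ∀ (x : G) (c : ↥S), T (e (x, c)) = e (x * ↑c, c))
    (g : G) (φ : MulAut G) (hφ : ⇑φ '' S = S)
    (σ : ↥S ≃ ↥S) (hσ : ∀ c : ↥S, (↑(σ c) : G) = φ ↑c)
    (hP : ∀ (x : G) (c : ↥S), P (e (x, c)) = e (g * φ x, σ c)) :
    T ∘L P = P ∘L T := by
  have hdense : Dense (Submodule.span ℂ (Set.range e) : Set H) :=
    Submodule.dense_iff_topologicalClosure_eq_top.mpr e.dense_span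
  refine ContinuousLinearMap.ext_on hdense ?_
  rintro _ ⟨⟨x, c⟩, rfl⟩
  simp only [ContinuousLinearMap.comp_apply, hT, hP]
  rw [hσ]
  congr 2
  rw [map_mul, mul_assoc]
end

section
/- Let (U_n) be a sequence of local unitaries and (C_n), (C̃_n) quantum coins. The family of identities W_{C̃}(n)|ψ̃₀⟩ = U_n W_C(n)|ψ₀⟩ for all n ≥ 0 and all initial states |ψ₀⟩ holds if and only if |ψ̃₀⟩ = U₀|ψ₀⟩ and T C̃_n = U_{n+1} T C_n U_n† for all n ≥ 0. -/
open scoped InnerProductSpace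

/-- `A` is a local operation on `ℋ = ℓ²(G) ⊗ ℓ²(S)`: it has no matrix
elements between distinct positions, i.e. `A = Σ_{x ∈ G} |x⟩⟨x| ⊗ A_x`. -/
def IsLocal {G : Type*} [Group G] {S : Set G}
    {H : Type*} [NormedAddCommGroup H] [InnerProductSpace ℂ H]
    (e : HilbertBasis (G × ↥S) ℂ H) (A : H →L[ℂ] H) : Prop :=
  ∀ (x y : G) (c d : ↥S), y ≠ x → ⟪e (y, d), A (e (x, c))⟫_ℂ = 0

/-- The quantum walk evolution operator `W_C(n) = T C_{n-1} T C_{n-2} ⋯ T C_0`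
(with `W_C(0) = Id`). -/
def walkOp {H : Type*} [NormedAddCommGroup H] [InnerProductSpace ℂ H]
    (T : H →L[ℂ] H) (C : ℕ → H →L[ℂ] H) : ℕ → H →L[ℂ] H
  | 0 => 1
  | n + 1 => T ∘L C n ∘L walkOp T C n

/-- For a sequence `(U_n)` of local unitaries and quantum coins `(C_n)`,
`(C̃_n)`, the family of identities `W_{C̃}(n) |ψ̃₀⟩ = U_n W_C(n) |ψ₀⟩` (for
all `n ≥ 0` and all initial states `ψ₀`, with `ψ̃₀` the transform of `ψ₀`)
holds if and only if `ψ̃₀ = U₀ ψ₀` for all `ψ₀` and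
`T C̃_n = U_{n+1} T C_n U_n†` for all `n ≥ 0`. -/
theorem symmetry_iff_difference_conditions {G : Type*} [Group G] (S : Set G)
    (H : Type*) [NormedAddCommGroup H] [InnerProductSpace ℂ H] [CompleteSpace H]
    (e : HilbertBasis (G × ↥S) ℂ H) (T : H →L[ℂ] H)
    (hT : ∀ (x : G) (c : ↥S), T (e (x, c)) = e (x * ↑c, c))
    (hTu : T ∈ unitary (H →L[ℂ] H))
    (U C Ct : ℕ → H →L[ℂ] H)
    (hU : ∀ n, U n ∈ unitary (H →L[ℂ] H) ∧ IsLocal e (U n))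
    (hC : ∀ n, C n ∈ unitary (H →L[ℂ] H) ∧ IsLocal e (C n))
    (hCt : ∀ n, Ct n ∈ unitary (H →L[ℂ] H) ∧ IsLocal e (Ct n))
    (Ψ : H → H) :
    (∀ (n : ℕ) (ψ₀ : H), walkOp T Ct n (Ψ ψ₀) = U n (walkOp T C n ψ₀)) ↔
      ((∀ ψ₀ : H, Ψ ψ₀ = U 0 ψ₀) ∧
        ∀ n : ℕ, T ∘L Ct n = U (n + 1) ∘L T ∘L C n ∘L star (U n)) := by

  constructor
  · intro h
    have h0 : ∀ ψ₀ : H, Ψ ψ₀ = U 0 ψ₀ := by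
      intro ψ₀
      have := h 0 ψ₀
      simpa [walkOp] using this
    refine ⟨h0, ?_⟩
    -- walkOp T C n is unitary
    have hwu : ∀ n, walkOp T C n ∈ unitary (H →L[ℂ] H) := by
      intro n
      induction n with
      | zero => exact one_mem _
      | succ n ih =>
        have : walkOp T C (n+1) = T * (C n * walkOp T C n) := rfl
        rw [this]
        exact mul_mem hTu (mul_mem (hC n).1 ih)
    intro n
    ext v
    -- surjectivity of U n
    set w := star (U n) v with hw
    have hUv : U n w = v := by
      have := Unitary.mul_star_self_of_mem (hU n).1
      have := congrArg (fun (A : H →L[ℂ] H) => A v) this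
      simpa [hw] using this
    -- surjectivity of walk: pick ψ with walk C n ψ = w
    set ψ := star (walkOp T C n) w with hψ
    have hwalk : walkOp T C n ψ = w := by
      have := Unitary.mul_star_self_of_mem (hwu n)
      have := congrArg (fun (A : H →L[ℂ] H) => A w) this
      simpa [hψ] using this
    have hn := h n ψ
    have hn1 := h (n+1) ψ
    simp only [walkOp, ContinuousLinearMap.comp_apply] at hn1
    rw [hn, hwalk] at hn1
    -- hn1 : T (Ct n (U n w)) = U (n+1) (T (C n w))
    rw [hUv] at hn1
    simpa [hw] using hn1
  · rintro ⟨h0, hcond⟩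
    intro n
    induction n with
    | zero => intro ψ₀; simpa [walkOp] using h0 ψ₀
    | succ n ih =>
      intro ψ₀
      have hstar : star (U n) (U n (walkOp T C n ψ₀)) = walkOp T C n ψ₀ := by
        have := Unitary.star_mul_self_of_mem (hU n).1
        have := congrArg (fun (A : H →L[ℂ] H) => A (walkOp T C n ψ₀)) this
        simpa using this
      have := congrArg (fun (A : H →L[ℂ] H) => A (U n (walkOp T C n ψ₀))) (hcond n)
      simp only [ContinuousLinearMap.comp_apply] at this
      rw [hstar] at this
      calc walkOp T Ct (n+1) (Ψ ψ₀)
          = T (Ct n (walkOp T Ct n (Ψ ψ₀))) := rfl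
        _ = T (Ct n (U n (walkOp T C n ψ₀))) := by rw [ih ψ₀]
        _ = U (n+1) (T (C n (walkOp T C n ψ₀))) := this
        _ = U (n+1) (walkOp T C (n+1) ψ₀) := rfl
end

section
/- Suppose a sequence of local unitaries (U_n) satisfies T C̃_n = U_{n+1} T C_n U_n† for all n ≥ 0 and for all quantum coins (C_n) (with corresponding (C̃_n) local unitaries). Then for every n ≥ 1, each component U_{n,x} is diagonal in the geometrical basis of ℓ²(S); i.e., there exist complex units u_{n,x,c} with U_n = Σ_{x∈G} Σ_{c∈S} u_{n,x,c} |x,c⟩⟨x,c|. -/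
open scoped InnerProductSpace

/-- If a sequence `(U_n)` of local unitaries satisfies
`T C̃_n = U_{n+1} T C_n U_n†` (for all `n`, with `(C̃_n)` local unitaries)
for every quantum coin `(C_n)`, then for every `n ≥ 1` each component
`U_{n,x}` is diagonal in the geometrical basis: there are complex units
`u_{n,x,c}` with `U_n = Σ_{x,c} u_{n,x,c} |x,c⟩⟨x,c|`. -/
theorem symmetry_components_diagonal {G : Type*} [Group G] [DecidableEq G] (S : Set G) [DecidableEq ↥S]
    (H : Type*) [NormedAddCommGroup H] [InnerProductSpace ℂ H] [CompleteSpace H]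
    (e : HilbertBasis (G × ↥S) ℂ H) (T : H →L[ℂ] H)
    (hT : ∀ (x : G) (c : ↥S), T (e (x, c)) = e (x * ↑c, c))
    (hTu : T ∈ unitary (H →L[ℂ] H))
    (U : ℕ → H →L[ℂ] H)
    (hU : ∀ n, U n ∈ unitary (H →L[ℂ] H) ∧ IsLocal e (U n))
    (hsymm : ∀ C : ℕ → H →L[ℂ] H,
      (∀ n, C n ∈ unitary (H →L[ℂ] H) ∧ IsLocal e (C n)) →
      ∃ Ct : ℕ → H →L[ℂ] H,
        (∀ n, Ct n ∈ unitary (H →L[ℂ] H) ∧ IsLocal e (Ct n)) ∧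
        ∀ n : ℕ, T ∘L Ct n = U (n + 1) ∘L T ∘L C n ∘L star (U n)) :
    ∀ n : ℕ, 1 ≤ n → ∃ u : G → ↥S → ℂ,
      (∀ (x : G) (c : ↥S), ‖u x c‖ = 1) ∧
      ∀ (x y : G) (c d : ↥S),
        ⟪e (y, d), U n (e (x, c))⟫_ℂ = if (y, d) = (x, c) then u x c else 0 := by
  intro n hn
  obtain ⟨m, rfl⟩ : ∃ m, n = m + 1 := ⟨n - 1, by omega⟩
  -- Apply the symmetry hypothesis to the coin sequence `C := U` itself.
  obtain ⟨Ct, hCt, hrel⟩ := hsymm U hU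
  -- Then `T ∘L Ct m = U (m+1) ∘L T`.
  have hUs : U m * star (U m) = 1 := Unitary.mul_star_self_of_mem (hU m).1
  have hrel' : T ∘L Ct m = U (m + 1) ∘L T := by
    have h := hrel m
    rw [show (U m) ∘L (star (U m)) = 1 from hUs, ContinuousLinearMap.one_def, ContinuousLinearMap.comp_id] at h
    exact h
  -- Adjoint of T on basis vectors.
  have hTst : star T * T = 1 := Unitary.star_mul_self_of_mem hTu
  have hTadj : ∀ (y : G) (d : ↥S), (star T) (e (y, d)) = e (y * (↑d : G)⁻¹, d) := by
    intro y d
    have h2 : T (e (y * (↑d : G)⁻¹, d)) = e (y, d) := by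
      rw [hT]; congr 2; group
    calc (star T) (e (y, d)) = (star T) (T (e (y * (↑d : G)⁻¹, d))) := by rw [h2]
      _ = (star T * T) (e (y * (↑d : G)⁻¹, d)) := rfl
      _ = e (y * (↑d : G)⁻¹, d) := by rw [hTst]; rfl
  -- Matrix elements of U (m+1) in terms of the local operator Ct m.
  have hval : ∀ (x : G) (c : ↥S),
      U (m + 1) (e (x, c)) = T (Ct m (e (x * (↑c : G)⁻¹, c))) := by
    intro x c
    have h1 : T (e (x * (↑c : G)⁻¹, c)) = e (x, c) := by
      rw [hT]; congr 2; group
    have h2 := congrArg (fun A : H →L[ℂ] H => A (e (x * (↑c : G)⁻¹, c))) hrel'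
    simp only [ContinuousLinearMap.comp_apply] at h2
    rw [h1] at h2
    exact h2.symm
  have hmat : ∀ (x y : G) (c d : ↥S),
      ⟪e (y, d), U (m + 1) (e (x, c))⟫_ℂ
        = ⟪e (y * (↑d : G)⁻¹, d), Ct m (e (x * (↑c : G)⁻¹, c))⟫_ℂ := by
    intro x y c d
    rw [hval,
      show ⟪e (y, d), T (Ct m (e (x * (↑c : G)⁻¹, c)))⟫_ℂ
          = ⟪(ContinuousLinearMap.adjoint T) (e (y, d)),
              Ct m (e (x * (↑c : G)⁻¹, c))⟫_ℂ from
        (ContinuousLinearMap.adjoint_inner_left T _ _).symm,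
      ← ContinuousLinearMap.star_eq_adjoint, hTadj]
  -- Off-diagonal matrix elements vanish.
  have hoff : ∀ (x y : G) (c d : ↥S), (y, d) ≠ (x, c) →
      ⟪e (y, d), U (m + 1) (e (x, c))⟫_ℂ = 0 := by
    intro x y c d hne
    by_cases hyx : y = x
    · subst hyx
      have hdc : d ≠ c := by
        intro h; exact hne (by rw [h])
      have hpos : y * (↑d : G)⁻¹ ≠ y * (↑c : G)⁻¹ := by
        intro h
        apply hdc
        have := mul_left_cancel h
        exact Subtype.ext (inv_injective this)
      rw [hmat]
      exact (hCt m).2 _ _ c d hpos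
    · exact (hU (m + 1)).2 x y c d hyx
  -- Diagonal entries.
  refine ⟨fun x c => ⟪e (x, c), U (m + 1) (e (x, c))⟫_ℂ, ?_, ?_⟩
  · intro x c
    set u : ℂ := ⟪e (x, c), U (m + 1) (e (x, c))⟫_ℂ with hu
    have horth := orthonormal_iff_ite.mp e.orthonormal
    -- U (m+1) (e (x,c)) = u • e (x,c)
    have hvec : U (m + 1) (e (x, c)) = u • e (x, c) := by
      have hrepr : e.repr (U (m + 1) (e (x, c))) = e.repr (u • e (x, c)) := by
        apply lp.ext
        funext j
        rw [e.repr_apply_apply, e.repr_apply_apply]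
        by_cases hj : j = (x, c)
        · subst hj
          rw [inner_smul_right, horth]
          simp [hu]
        · rcases j with ⟨y, d⟩
          rw [hoff x y c d hj, inner_smul_right, horth]
          simp [hj]
      exact e.repr.injective hrepr
    have hnorm1 : ‖e (x, c)‖ = 1 := e.orthonormal.1 (x, c)
    have hUnorm : ‖U (m + 1) (e (x, c))‖ = ‖e (x, c)‖ :=
      ContinuousLinearMap.norm_map_of_mem_unitary (hU (m + 1)).1 _
    rw [hvec, norm_smul, hnorm1, mul_one] at hUnorm
    exact hUnorm
  · intro x y c d
    by_cases h : (y, d) = (x, c)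
    · rw [if_pos h]
      rw [Prod.mk.injEq] at h
      rw [h.1, h.2]
    · rw [if_neg h, hoff x y c d h]
end
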